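/- arXiv:2109.01515 — 2 statements merged into one kernel-verified Lean document; each statement's English description precedes it below -/
import Mathlib

section
/- For all real r > 0 and x > 0, one has x·ψ'(x+r) − ψ(x+r) + ψ(r) < 0, where ψ denotes the digamma function and ψ' its derivative (the trigamma function). -/
open Real Set Filter Topology

/-- The digamma function `ψ(x) = Γ'(x)/Γ(x)`. -/
noncomputable def digamma (x : ℝ) : ℝ := deriv Real.Gamma x / Real.Gamma x

lemma diffGamma {s : ℝ} (hs : 0 < s) : DifferentiableAt ℝ Real.Gamma s :=
  Real.differentiableAt_Gamma fun m => ne_of_gt (by have := Nat.cast_nonneg (α := ℝ) m; linarith)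

lemma digamma_add_one {s : ℝ} (hs : 0 < s) : digamma (s + 1) = digamma s + 1 / s := by
  have hG := Real.Gamma_pos_of_pos hs
  have h1 : deriv Real.Gamma (s + 1) = Real.Gamma s + s * deriv Real.Gamma s := by
    have e1 : deriv (fun x => Real.Gamma (x + 1)) s = deriv Real.Gamma (s + 1) := by
      rw [deriv_comp_add_const]
    rw [← e1]
    have heq : (fun x => Real.Gamma (x + 1)) =ᶠ[𝓝 s] fun x => x * Real.Gamma x := by
      filter_upwards [eventually_gt_nhds hs] with y hy
      rw [Real.Gamma_add_one hy.ne']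
    rw [heq.deriv_eq, deriv_fun_mul differentiableAt_fun_id (diffGamma hs)]
    simp
  unfold digamma
  rw [h1, Real.Gamma_add_one hs.ne']
  field_simp
  ring

lemma diffLogGamma {s : ℝ} (hs : 0 < s) : DifferentiableAt ℝ (Real.log ∘ Real.Gamma) s :=
  (diffGamma hs).log (Real.Gamma_pos_of_pos hs).ne'

lemma deriv_logGamma {s : ℝ} (hs : 0 < s) : deriv (Real.log ∘ Real.Gamma) s = digamma s := by
  rw [Function.comp_def, deriv.log (diffGamma hs) (Real.Gamma_pos_of_pos hs).ne']
  rfl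

lemma logGamma_add_one {s : ℝ} (hs : 0 < s) :
    (Real.log ∘ Real.Gamma) (s + 1) = (Real.log ∘ Real.Gamma) s + Real.log s := by
  simp only [Function.comp_apply, Real.Gamma_add_one hs.ne',
    Real.log_mul hs.ne' (Real.Gamma_pos_of_pos hs).ne']
  ring

lemma digamma_le_log {s : ℝ} (hs : 0 < s) : digamma s ≤ Real.log s := by
  have h := Real.convexOn_log_Gamma.deriv_le_slope (mem_Ioi.mpr hs)
    (mem_Ioi.mpr (by linarith : (0:ℝ) < s + 1)) (by linarith) (diffLogGamma hs)
  rw [deriv_logGamma hs] at h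
  refine h.trans (le_of_eq ?_)
  rw [slope_def_field, logGamma_add_one hs, show s + 1 - s = (1:ℝ) by ring]
  simp

lemma log_le_digamma {s : ℝ} (hs : 1 < s) : Real.log (s - 1) ≤ digamma s := by
  have h0 : (0:ℝ) < s - 1 := by linarith
  have h := Real.convexOn_log_Gamma.slope_le_deriv (mem_Ioi.mpr h0)
    (mem_Ioi.mpr (by linarith : (0:ℝ) < s)) (by linarith) (diffLogGamma (by linarith))
  rw [deriv_logGamma (by linarith : (0:ℝ) < s)] at h
  refine le_trans (le_of_eq ?_) h
  rw [slope_def_field]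
  rw [show s - (s-1) = (1:ℝ) by ring, div_one,
    show (Real.log ∘ Real.Gamma) s = (Real.log ∘ Real.Gamma) ((s-1)+1) by ring_nf,
    logGamma_add_one h0]
  ring

lemma digamma_add_nat {t : ℝ} (ht : 0 < t) (n : ℕ) :
    digamma (t + n) = digamma t + ∑ k ∈ Finset.range n, 1 / (t + k) := by
  induction n with
  | zero => simp
  | succ n ih =>
    have h : (t + (n + 1 : ℕ) : ℝ) = (t + n) + 1 := by push_cast; ring
    rw [h, digamma_add_one (by positivity), ih, Finset.sum_range_succ]
    ring

lemma log_sub_log_tendsto (a b : ℝ) :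
    Tendsto (fun n : ℕ => Real.log ((n : ℝ) + a) - Real.log ((n : ℝ) + b)) atTop (𝓝 0) := by
  have hb : Tendsto (fun n : ℕ => (n : ℝ) + b) atTop atTop :=
    tendsto_atTop_add_const_right atTop b tendsto_natCast_atTop_atTop
  have h1 : Tendsto (fun n : ℕ => ((n : ℝ) + a) / ((n : ℝ) + b)) atTop (𝓝 1) := by
    have h2 : Tendsto (fun n : ℕ => 1 + (a - b) / ((n : ℝ) + b)) atTop (𝓝 (1 + 0)) :=
      tendsto_const_nhds.add (Tendsto.div_atTop tendsto_const_nhds hb)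
    rw [add_zero] at h2
    refine h2.congr' ?_
    filter_upwards [hb.eventually_gt_atTop 0] with n hn
    field_simp
    ring
  have h2 := (Real.continuousAt_log one_ne_zero).tendsto.comp h1
  rw [Real.log_one] at h2
  refine h2.congr' ?_
  filter_upwards [hb.eventually_gt_atTop 0,
    (tendsto_atTop_add_const_right atTop a tendsto_natCast_atTop_atTop).eventually_gt_atTop 0]
    with n hn hn'
  simp only [Function.comp_apply]
  rw [Real.log_div hn'.ne' hn.ne']

lemma tail_tendsto {r t : ℝ} (hr : 0 < r) (ht : 0 < t) :
    Tendsto (fun n : ℕ => digamma (r + n) - digamma (t + n)) atTop (𝓝 0) := by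
  refine tendsto_of_tendsto_of_tendsto_of_le_of_le'
    (log_sub_log_tendsto (r - 1) t) (log_sub_log_tendsto r (t - 1)) ?_ ?_
  · filter_upwards [eventually_ge_atTop 1] with n hn
    have hn1 : (1:ℝ) ≤ (n:ℝ) := by exact_mod_cast hn
    have h1 : Real.log (r + n - 1) ≤ digamma (r + n) := log_le_digamma (by linarith)
    have h2 : digamma (t + n) ≤ Real.log (t + n) := digamma_le_log (by linarith)
    have e1 : (n:ℝ) + (r - 1) = r + n - 1 := by ring
    have e2 : (n:ℝ) + t = t + n := by ring
    rw [e1, e2]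
    linarith
  · filter_upwards [eventually_ge_atTop 1] with n hn
    have hn1 : (1:ℝ) ≤ (n:ℝ) := by exact_mod_cast hn
    have h1 : digamma (r + n) ≤ Real.log (r + n) := digamma_le_log (by linarith)
    have h2 : Real.log (t + n - 1) ≤ digamma (t + n) := log_le_digamma (by linarith)
    have e1 : (n:ℝ) + r = r + n := by ring
    have e2 : (n:ℝ) + (t - 1) = t + n - 1 := by ring
    rw [e1, e2]
    linarith

lemma summable_inv_sq {a : ℝ} (ha : 0 < a) : Summable (fun k : ℕ => 1 / (a + k) ^ 2) := by
  set m := min a 1 with hm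
  have hm0 : 0 < m := lt_min ha one_pos
  have base : Summable (fun k : ℕ => 1 / ((k : ℝ) + 1) ^ 2) := by
    have := (summable_nat_add_iff (f := fun n : ℕ => 1 / (n : ℝ) ^ 2) 1).mpr
      (summable_one_div_nat_pow.mpr one_lt_two)
    refine this.congr fun k => by push_cast; ring_nf
  refine Summable.of_nonneg_of_le (fun k => by positivity) (fun k => ?_) (base.mul_left (1 / m ^ 2))
  have h1 : m * ((k : ℝ) + 1) ≤ a + k := by
    have h2 : m ≤ a := min_le_left _ _
    have h3 : m ≤ 1 := min_le_right _ _
    have h4 : m * k ≤ k := by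
      nlinarith [Nat.cast_nonneg (α := ℝ) k]
    nlinarith
  have h5 : (0:ℝ) < m * ((k : ℝ) + 1) := by positivity
  calc 1 / (a + k) ^ 2 ≤ 1 / (m * ((k:ℝ) + 1)) ^ 2 := by
        apply one_div_le_one_div_of_le (by positivity)
        exact pow_le_pow_left₀ h5.le h1 2
    _ = 1 / m ^ 2 * (1 / ((k:ℝ) + 1) ^ 2) := by rw [mul_pow, ← one_div_mul_one_div]

lemma summable_F {r t : ℝ} (hr : 0 < r) (ht : 0 < t) :
    Summable (fun k : ℕ => 1 / (r + k) - 1 / (t + k)) := by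
  set m := min r t with hm
  have hm0 : 0 < m := lt_min hr ht
  refine Summable.of_norm_bounded (((summable_inv_sq hm0)).mul_left |t - r|) (fun k => ?_)
  have hrk : (0:ℝ) < r + k := by positivity
  have htk : (0:ℝ) < t + k := by positivity
  have hmk : (0:ℝ) < m + k := by positivity
  have e : 1 / (r + k) - 1 / (t + k) = (t - r) / ((r + k) * (t + k)) := by
    field_simp
    ring
  have h1 : (m + k) ^ 2 ≤ (r + k) * (t + k) := by
    have hmr : m ≤ r := min_le_left _ _
    have hmt : m ≤ t := min_le_right _ _
    nlinarith
  rw [e, Real.norm_eq_abs, abs_div, abs_of_pos (mul_pos hrk htk), mul_one_div]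
  exact div_le_div_of_nonneg_left (abs_nonneg _) (by positivity) h1

lemma hasSum_digamma_sub {r t : ℝ} (hr : 0 < r) (ht : 0 < t) :
    HasSum (fun k : ℕ => 1 / (r + k) - 1 / (t + k)) (digamma t - digamma r) := by
  have hsum := summable_F hr ht
  have h1 := hsum.hasSum.tendsto_sum_nat
  have h2 : Tendsto (fun n : ℕ => ∑ k ∈ Finset.range n, (1 / (r + k) - 1 / (t + k)))
      atTop (𝓝 (digamma t - digamma r)) := by
    have e : ∀ n : ℕ, ∑ k ∈ Finset.range n, (1 / (r + k) - 1 / (t + k))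
        = (digamma t - digamma r) - (digamma (t + n) - digamma (r + n)) := by
      intro n
      rw [Finset.sum_sub_distrib]
      have e1 := digamma_add_nat hr n
      have e2 := digamma_add_nat ht n
      linarith [e1, e2]
    rw [funext e]
    have h3 : Tendsto (fun n : ℕ => (digamma t - digamma r) - (digamma (t + n) - digamma (r + n)))
        atTop (𝓝 ((digamma t - digamma r) - 0)) :=
      (tendsto_const_nhds.sub (tail_tendsto ht hr))
    rwa [sub_zero] at h3
  have := tendsto_nhds_unique h1 h2
  rw [← this]
  exact hsum.hasSum

lemma hasDerivAt_digamma {r p : ℝ} (hr : 0 < r) (hp : r < p) :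
    HasDerivAt digamma (∑' k : ℕ, 1 / (p + k) ^ 2) p := by
  have hp0 : 0 < p := hr.trans hp
  have hg : ∀ (k : ℕ) (y : ℝ), y ∈ Ioi r →
      HasDerivAt (fun z : ℝ => 1 / (r + k) - 1 / (z + k)) (1 / (y + k) ^ 2) y := by
    intro k y hy
    have hyk : (0:ℝ) < y + k := by
      have h0 : r < y := hy
      have := Nat.cast_nonneg (α := ℝ) k
      linarith
    have h1 : HasDerivAt (fun z : ℝ => z + k) 1 y := (hasDerivAt_id y).add_const _
    have h2 := h1.inv hyk.ne'
    have h3 := h2.const_sub (1 / (r + k))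
    have e : -(-1 / (y + (k:ℝ)) ^ 2) = 1 / (y + k) ^ 2 := by ring
    simpa only [one_div, e, Pi.inv_apply] using h3
  have hg' : ∀ (k : ℕ) (y : ℝ), y ∈ Ioi r → ‖(1:ℝ) / (y + k) ^ 2‖ ≤ 1 / (r + k) ^ 2 := by
    intro k y hy
    have hry : r < y := hy
    have hrk : (0:ℝ) < r + k := by positivity
    have hyk : (0:ℝ) < y + k := by linarith [Nat.cast_nonneg (α := ℝ) k]
    rw [Real.norm_eq_abs, abs_of_pos (by positivity)]
    apply one_div_le_one_div_of_le (by positivity)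
    have : r + (k:ℝ) ≤ y + k := by linarith
    exact pow_le_pow_left₀ hrk.le this 2
  have key : HasDerivAt (fun z : ℝ => ∑' k : ℕ, (1 / (r + k) - 1 / (z + k)))
      (∑' k : ℕ, 1 / (p + k) ^ 2) p :=
    hasDerivAt_tsum_of_isPreconnected (summable_inv_sq hr) isOpen_Ioi isPreconnected_Ioi
      hg hg' (mem_Ioi.mpr hp) (summable_F hr hp0) (mem_Ioi.mpr hp)
  have key2 := (key.const_add (digamma r))
  refine key2.congr_of_eventuallyEq ?_
  filter_upwards [Ioi_mem_nhds hp0] with z hz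
  have := (hasSum_digamma_sub hr (mem_Ioi.mp hz)).tsum_eq
  rw [this]
  ring

theorem mul_trigamma_sub_digamma_neg (r x : ℝ) (hr : 0 < r) (hx : 0 < x) :
    x * deriv digamma (x + r) - digamma (x + r) + digamma r < 0 := by
  set p := x + r with hp_def
  have hp : r < p := by simp only [hp_def]; linarith
  have hp0 : 0 < p := by linarith
  have hD : deriv digamma p = ∑' k : ℕ, 1 / (p + k) ^ 2 := (hasDerivAt_digamma hr hp).deriv
  have hSsum : HasSum (fun k : ℕ => 1 / (r + k) - 1 / (p + k)) (digamma p - digamma r) :=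
    hasSum_digamma_sub hr hp0
  have hGsum : HasSum (fun k : ℕ => x * (1 / (p + k) ^ 2))
      (x * ∑' k : ℕ, 1 / (p + k) ^ 2) := (summable_inv_sq hp0).hasSum.mul_left x
  have hlt : x * ∑' k : ℕ, 1 / (p + k) ^ 2 < digamma p - digamma r := by
    refine hasSum_lt (f := fun k : ℕ => x * (1 / (p + k) ^ 2)) (i := 0) ?_ ?_ hGsum hSsum
    · intro k
      have hrk : (0:ℝ) < r + k := by positivity
      have hpk : (0:ℝ) < p + k := by positivity
      have e : 1 / (r + k) - 1 / (p + k) = x / ((r + k) * (p + k)) := by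
        rw [hp_def]; field_simp; ring
      show x * (1 / (p + k) ^ 2) ≤ 1 / (r + k) - 1 / (p + k)
      rw [e]
      have h1 : x * (1 / (p + k) ^ 2) = x / ((p + k) * (p + k)) := by
        rw [mul_one_div, sq]
      rw [h1]
      apply le_of_lt
      apply div_lt_div_of_pos_left hx (by positivity)
      have : r + (k:ℝ) < p + k := by linarith
      nlinarith
    · show x * (1 / (p + (0:ℕ)) ^ 2) < 1 / (r + (0:ℕ)) - 1 / (p + (0:ℕ))
      push_cast
      rw [add_zero, add_zero]
      have e : 1 / r - 1 / p = x / (r * p) := by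
        rw [hp_def]; field_simp; ring
      rw [e, mul_one_div, sq]
      apply div_lt_div_of_pos_left hx (by positivity)
      nlinarith
  linarith [hD ▸ hlt]
end

section
/- Let r ≥ 1 be an integer and n ≥ 1 a natural number. Then Γ(r)·∑_{k=1}^n h_k^{(r)}/k^r = (H_n² + H_n^{(2)})/2 − (ψ(r)+γ)·H_n + ∑_{j=0}^{r−1} [r j]·(∑_{k=1}^n H_{k+r−1}/k^{r+1−j} − (ψ(r)+γ)·H_n^{(r+1−j)}) + ∑_{j=1}^{r−1} H_j/j − H_{r−1}·(H_{n+r−1} − H_n) + ∑_{j=1}^{r−1} H_{j−1}/(j+n). -/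
open MeasureTheory Filter Topology

/-- The rising factorial `x^{r̄} = Γ(x+r)/Γ(x)`. -/
noncomputable def rise (x r : ℝ) : ℝ := Real.Gamma (x + r) / Real.Gamma x

/-- The analytic extension of the hyperharmonic numbers:
`h_x^{(r)} = (x^{r̄}/(x Γ(r)))(ψ(x+r) − ψ(r))` for `r > 0`, and `h_x^{(0)} = 1/x`. -/
noncomputable def hyp (r x : ℝ) : ℝ :=
  if r = 0 then 1 / x
  else rise x r / (x * Real.Gamma r) * (digamma (x + r) - digamma r)

/-- `y_n(r) = ∑_{k=1}^n h_k^{(r)}/k^r − ∫_1^n h_x^{(r)}/x^r dx`. -/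
noncomputable def yseq (r : ℝ) (n : ℕ) : ℝ :=
  ∑ k ∈ Finset.Icc 1 n, hyp r k / (k : ℝ) ^ r - ∫ x in (1:ℝ)..(n:ℝ), hyp r x / x ^ r

/-- `z_n(r) = ∑_{k=1}^{n-1} h_k^{(r)}/k^r − ∫_1^n h_x^{(r)}/x^r dx`. -/
noncomputable def zseq (r : ℝ) (n : ℕ) : ℝ :=
  ∑ k ∈ Finset.Icc 1 (n - 1), hyp r k / (k : ℝ) ^ r - ∫ x in (1:ℝ)..(n:ℝ), hyp r x / x ^ r

/-- `b_n(r) = ∑_{k=1}^n h_k^{(r)}/k^{r̄} − ∫_1^n h_x^{(r)}/x^{r̄} dx`. -/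
noncomputable def bseq (r : ℝ) (n : ℕ) : ℝ :=
  ∑ k ∈ Finset.Icc 1 n, hyp r k / rise k r - ∫ x in (1:ℝ)..(n:ℝ), hyp r x / rise x r

/-- `a_n(r) = ∑_{k=1}^{n-1} h_k^{(r)}/k^{r̄} − ∫_1^n h_x^{(r)}/x^{r̄} dx`. -/
noncomputable def aseq (r : ℝ) (n : ℕ) : ℝ :=
  ∑ k ∈ Finset.Icc 1 (n - 1), hyp r k / rise k r - ∫ x in (1:ℝ)..(n:ℝ), hyp r x / rise x r
/-- The `m`-th harmonic number `H_m = ∑_{k=1}^m 1/k` (with `H 0 = 0`). -/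
noncomputable def H (m : ℕ) : ℝ := ∑ k ∈ Finset.Icc 1 m, (1 : ℝ) / k

/-- The generalized harmonic number `H_m^{(s)} = ∑_{k=1}^m 1/k^s`. -/
noncomputable def Hgen (m s : ℕ) : ℝ := ∑ k ∈ Finset.Icc 1 m, (1 : ℝ) / (k : ℝ) ^ s

/-- The unsigned Stirling numbers of the first kind, via the recurrence
`[n+1, k+1] = n·[n, k+1] + [n, k]`, `[0,0] = 1`. -/
def stirling1 : ℕ → ℕ → ℕ
  | 0, 0 => 1
  | 0, _ + 1 => 0
  | _ + 1, 0 => 0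
  | n + 1, k + 1 => n * stirling1 n (k + 1) + stirling1 n k

open Finset Real

lemma H_succ (m : ℕ) : H (m + 1) = H m + 1 / (m + 1) := by
  unfold H
  rw [Finset.sum_Icc_succ_top (by omega)]
  push_cast; ring

lemma H_zero : H 0 = 0 := by simp [H]

lemma H_eq_harmonic (m : ℕ) : H m = (harmonic m : ℝ) := by
  induction m with
  | zero => simp [H_zero]
  | succ n ih => rw [H_succ, harmonic_succ, ih]; push_cast; ring

lemma digamma_nat (m : ℕ) (hm : 1 ≤ m) :
    digamma m = H (m - 1) - Real.eulerMascheroniConstant := by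
  obtain ⟨n, rfl⟩ : ∃ n, m = n + 1 := ⟨m - 1, by omega⟩
  have h1 : ((n + 1 : ℕ) : ℝ) = (n : ℝ) + 1 := by push_cast; ring
  have hfac : (Nat.factorial n : ℝ) ≠ 0 := by positivity
  rw [digamma, h1, Real.deriv_Gamma_nat, Real.Gamma_nat_eq_factorial,
    mul_comm, mul_div_assoc, div_self hfac, mul_one,
    Nat.add_sub_cancel, H_eq_harmonic]
  ring

lemma stirling1_of_lt {n k : ℕ} (h : n < k) : stirling1 n k = 0 := by
  induction n generalizing k with
  | zero => obtain ⟨m, rfl⟩ : ∃ m, k = m + 1 := ⟨k - 1, by omega⟩; rfl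
  | succ n ih =>
    obtain ⟨m, rfl⟩ : ∃ m, k = m + 1 := ⟨k - 1, by omega⟩
    show n * stirling1 n (m + 1) + stirling1 n m = 0
    rw [ih (by omega), ih (by omega)]; ring

lemma stirling1_self (n : ℕ) : stirling1 n n = 1 := by
  induction n with
  | zero => rfl
  | succ n ih =>
    show n * stirling1 n (n + 1) + stirling1 n n = 1
    rw [stirling1_of_lt (by omega), ih]; ring

lemma stirling1_zero_right (r : ℕ) : (r : ℝ) * (stirling1 r 0 : ℝ) = 0 := by
  cases r with
  | zero => simp
  | succ m => show _ * ((0 : ℕ) : ℝ) = 0; simp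

lemma stirling1_poly (r : ℕ) (x : ℝ) :
    ∑ j ∈ Finset.range (r + 2), (stirling1 (r + 1) j : ℝ) * x ^ j =
      (x + r) * ∑ j ∈ Finset.range (r + 1), (stirling1 r j : ℝ) * x ^ j := by
  have hrec : ∀ j, (stirling1 (r + 1) (j + 1) : ℝ)
      = r * stirling1 r (j + 1) + stirling1 r j := by
    intro j; push_cast [stirling1]; ring
  have h1 : ∑ j ∈ Finset.range (r + 2), (stirling1 (r + 1) j : ℝ) * x ^ j
      = ∑ j ∈ Finset.range (r + 1), (stirling1 (r + 1) (j + 1) : ℝ) * x ^ (j + 1) := by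
    rw [Finset.sum_range_succ']
    norm_num [show stirling1 (r + 1) 0 = 0 from rfl]
  have h2 : ∑ j ∈ Finset.range (r + 1), (stirling1 r (j + 1) : ℝ) * x ^ (j + 1)
      = ∑ j ∈ Finset.range (r + 1), (stirling1 r j : ℝ) * x ^ j
        - (stirling1 r 0 : ℝ) := by
    rw [Finset.sum_range_succ, stirling1_of_lt (by omega)]
    rw [Finset.sum_range_succ' (fun j => (stirling1 r j : ℝ) * x ^ j)]
    simp
  rw [h1]
  simp only [hrec, add_mul]
  rw [Finset.sum_add_distrib]
  have h3 : ∑ j ∈ Finset.range (r + 1), (r : ℝ) * (stirling1 r (j + 1) : ℝ) * x ^ (j + 1)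
      = (r : ℝ) * ∑ j ∈ Finset.range (r + 1), (stirling1 r (j + 1) : ℝ) * x ^ (j + 1) := by
    rw [Finset.mul_sum]; apply Finset.sum_congr rfl; intro j _; ring
  rw [h3, h2, mul_sub, stirling1_zero_right, sub_zero, add_comm]
  congr 1 <;> rw [Finset.mul_sum] <;> exact Finset.sum_congr rfl (fun j _ => by ring)

lemma rise_nat (k : ℕ) (hk : 1 ≤ k) (r : ℕ) :
    rise k r = ∑ j ∈ Finset.range (r + 1), (stirling1 r j : ℝ) * (k : ℝ) ^ j := by
  have hkpos : (0 : ℝ) < k := by exact_mod_cast hk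
  induction r with
  | zero =>
    simp [rise, div_self (Real.Gamma_pos_of_pos hkpos).ne', stirling1]
  | succ r ih =>
    have hx : (k : ℝ) + (r : ℝ) ≠ 0 := by positivity
    have hc : ((r + 1 : ℕ) : ℝ) = (r : ℝ) + 1 := by push_cast; ring
    have : rise k ((r + 1 : ℕ) : ℝ) = ((k : ℝ) + r) * rise k r := by
      unfold rise
      rw [hc, show (k : ℝ) + ((r : ℝ) + 1) = ((k : ℝ) + r) + 1 by ring,
        Real.Gamma_add_one hx]
      ring
    rw [this, ih, show r + 1 + 1 = r + 2 from rfl, stirling1_poly]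

lemma term_eq (r k : ℕ) (hr : 1 ≤ r) (hk : 1 ≤ k) :
    Real.Gamma r * (hyp r k / (k : ℝ) ^ r) =
      ∑ j ∈ Finset.range (r + 1), (stirling1 r j : ℝ) *
        ((H (k + r - 1) - H (r - 1)) / (k : ℝ) ^ (r + 1 - j)) := by
  have hrpos : (0 : ℝ) < r := by exact_mod_cast hr
  have hkpos : (0 : ℝ) < k := by exact_mod_cast hk
  have hΓ : Real.Gamma r ≠ 0 := (Real.Gamma_pos_of_pos hrpos).ne'
  have hkne : (k : ℝ) ≠ 0 := hkpos.ne'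
  have hcast : (k : ℝ) + (r : ℝ) = ((k + r : ℕ) : ℝ) := by push_cast; ring
  have hdig : digamma ((k : ℝ) + r) - digamma r = H (k + r - 1) - H (r - 1) := by
    rw [hcast, digamma_nat (k + r) (by omega), digamma_nat r hr]; ring
  have key : Real.Gamma r * (hyp r k / (k : ℝ) ^ r) =
      (∑ j ∈ Finset.range (r + 1), (stirling1 r j : ℝ) * (k : ℝ) ^ j) *
        ((H (k + r - 1) - H (r - 1)) / (k : ℝ) ^ (r + 1)) := by
    rw [hyp, if_neg hrpos.ne', hdig, ← rise_nat k hk r, pow_succ]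
    field_simp
  rw [key, Finset.sum_mul]
  apply Finset.sum_congr rfl
  intro j hj
  have hj' : j ≤ r := by simpa using Nat.lt_succ_iff.mp (Finset.mem_range.mp hj)
  have hpow : (k : ℝ) ^ (r + 1) = (k : ℝ) ^ j * (k : ℝ) ^ (r + 1 - j) := by
    rw [← pow_add]; congr 1; omega
  rw [mul_assoc]
  congr 1
  rw [hpow]
  field_simp

lemma Hgen_succ (m s : ℕ) : Hgen (m + 1) s = Hgen m s + 1 / ((m : ℝ) + 1) ^ s := by
  unfold Hgen
  rw [Finset.sum_Icc_succ_top (by omega)]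
  push_cast; ring

lemma sumA (n : ℕ) : ∑ k ∈ Finset.Icc 1 n, H k / k = ((H n) ^ 2 + Hgen n 2) / 2 := by
  induction n with
  | zero => simp [H, Hgen]
  | succ n ih =>
    rw [Finset.sum_Icc_succ_top (by omega), ih, H_succ, Hgen_succ]
    have h : ((n : ℝ) + 1) ≠ 0 := by positivity
    push_cast
    field_simp
    ring

lemma sumC (j : ℕ) (hj : 1 ≤ j) (n : ℕ) :
    ∑ k ∈ Finset.Icc 1 n, 1 / ((k : ℝ) * ((k : ℝ) + j)) =
      1 / (j : ℝ) * (H j + H n - H (n + j)) := by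
  have hjne : (j : ℝ) ≠ 0 := by positivity
  induction n with
  | zero => simp [H_zero]
  | succ n ih =>
    rw [Finset.sum_Icc_succ_top (by omega), ih, H_succ,
      show n + 1 + j = (n + j) + 1 by omega, H_succ (n + j)]
    have h1 : ((n : ℝ) + 1) ≠ 0 := by positivity
    have h2 : ((n : ℝ) + j + 1) ≠ 0 := by positivity
    push_cast
    field_simp
    ring

lemma sumE (m n : ℕ) :
    ∑ k ∈ Finset.Icc 1 n, H (k + m) / k =
      ((H n) ^ 2 + Hgen n 2) / 2 + ∑ j ∈ Finset.Icc 1 m, H j / j -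
        H m * (H (n + m) - H n) +
        ∑ j ∈ Finset.Icc 1 m, H (j - 1) / ((j : ℝ) + n) := by
  induction m with
  | zero => simpa [H_zero] using sumA n
  | succ m ih =>
    have hL : ∑ k ∈ Finset.Icc 1 n, H (k + (m + 1)) / k =
        ∑ k ∈ Finset.Icc 1 n, H (k + m) / k +
          ∑ k ∈ Finset.Icc 1 n, 1 / ((k : ℝ) * ((k : ℝ) + ((m + 1 : ℕ) : ℝ))) := by
      rw [← Finset.sum_add_distrib]
      apply Finset.sum_congr rfl
      intro k hk
      have hk1 : 1 ≤ k := (Finset.mem_Icc.mp hk).1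
      have hkne : (k : ℝ) ≠ 0 := by positivity
      have h2 : (k : ℝ) + ((m : ℝ) + 1) ≠ 0 := by positivity
      rw [show k + (m + 1) = (k + m) + 1 by omega, H_succ (k + m)]
      push_cast
      field_simp
      ring
    rw [hL, ih, sumC (m + 1) (by omega) n,
      Finset.sum_Icc_succ_top (show 1 ≤ m + 1 by omega),
      Finset.sum_Icc_succ_top (show 1 ≤ m + 1 by omega),
      H_succ m, show n + (m + 1) = (n + m) + 1 by omega, H_succ (n + m),
      Nat.add_sub_cancel]
    have h1 : ((m : ℝ) + 1) ≠ 0 := by positivity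
    have h2 : ((n : ℝ) + m + 1) ≠ 0 := by positivity
    push_cast
    field_simp
    ring

lemma Hgen_one (n : ℕ) : Hgen n 1 = H n := by simp [Hgen, H]

theorem gamma_mul_sum_hyp (r : ℕ) (hr : 1 ≤ r) (n : ℕ) (hn : 1 ≤ n) :
    Real.Gamma r * ∑ k ∈ Finset.Icc 1 n, hyp r k / (k : ℝ) ^ (r : ℕ) =
      ((H n) ^ 2 + Hgen n 2) / 2 - (digamma r + Real.eulerMascheroniConstant) * H n +
      ∑ j ∈ Finset.range r, (stirling1 r j : ℝ) *
        (∑ k ∈ Finset.Icc 1 n, H (k + r - 1) / (k : ℝ) ^ (r + 1 - j) -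
          (digamma r + Real.eulerMascheroniConstant) * Hgen n (r + 1 - j)) +
      ∑ j ∈ Finset.Icc 1 (r - 1), H j / (j : ℝ) -
      H (r - 1) * (H (n + r - 1) - H n) +
      ∑ j ∈ Finset.Icc 1 (r - 1), H (j - 1) / ((j : ℝ) + n) := by
  have hdg : digamma r + Real.eulerMascheroniConstant = H (r - 1) := by
    rw [digamma_nat r hr]; ring
  rw [hdg, Finset.mul_sum]
  rw [Finset.sum_congr rfl (fun k hk =>
    term_eq r k hr (Finset.mem_Icc.mp hk).1), Finset.sum_comm]
  have inner : ∀ j ∈ Finset.range (r + 1),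
      (∑ k ∈ Finset.Icc 1 n, (stirling1 r j : ℝ) *
        ((H (k + r - 1) - H (r - 1)) / (k : ℝ) ^ (r + 1 - j))) =
      (stirling1 r j : ℝ) *
        (∑ k ∈ Finset.Icc 1 n, H (k + r - 1) / (k : ℝ) ^ (r + 1 - j) -
          H (r - 1) * Hgen n (r + 1 - j)) := by
    intro j _
    rw [← Finset.mul_sum]
    congr 1
    rw [Hgen, Finset.mul_sum, ← Finset.sum_sub_distrib]
    apply Finset.sum_congr rfl
    intro k _
    rw [sub_div]
    ring
  rw [Finset.sum_congr rfl inner, Finset.sum_range_succ, stirling1_self]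
  have he : r + 1 - r = 1 := by omega
  rw [he, Hgen_one, Nat.cast_one, one_mul]
  have hconv : ∑ k ∈ Finset.Icc 1 n, H (k + r - 1) / (k : ℝ) ^ 1 =
      ∑ k ∈ Finset.Icc 1 n, H (k + (r - 1)) / (k : ℝ) := by
    apply Finset.sum_congr rfl
    intro k hk
    rw [pow_one, show k + r - 1 = k + (r - 1) by omega]
  rw [hconv, sumE (r - 1) n, show n + (r - 1) = n + r - 1 by omega]
  ring
end
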